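/- For n ≥ 3 and 1 ≤ p ≤ n−2, every order-preserving-or-order-reversing partial contraction α on [n] with |im α| = p can be written as a composition of two elements of ORCP_n each having image of size p+1. -/

import Mathlib

/-- Partial transformations on the chain with `n` elements. -/
abbrev PT (n : ℕ) := Fin n → Option (Fin n)

/-- Left-to-right composition of partial transformations: `x(f*g) = g(f(x))`. -/
instance PT.instMul (n : ℕ) : Mul (PT n) := ⟨fun f g x => (f x).bind g⟩

instance PT.instSemigroup (n : ℕ) : Semigroup (PT n) where
  mul_assoc f g h := funext fun x => by
    show ((f x).bind g).bind h = (f x).bind (fun y => (g y).bind h)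
    cases f x <;> rfl

/-- Domain of a partial transformation. -/
def dom {n : ℕ} (f : PT n) : Set (Fin n) := {x | (f x).isSome}

/-- Image of a partial transformation. -/
def im {n : ℕ} (f : PT n) : Set (Fin n) := {y | ∃ x, f x = some y}

/-- `f` is a contraction: `|f x - f y| ≤ |x - y|` on its domain. -/
def IsContraction {n : ℕ} (f : PT n) : Prop :=
  ∀ x y a b, f x = some a → f y = some b → Nat.dist a.val b.val ≤ Nat.dist x.val y.val

/-- `f` is order-preserving on its domain. -/
def IsOP {n : ℕ} (f : PT n) : Prop :=
  ∀ x y a b, f x = some a → f y = some b → x ≤ y → a ≤ b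

/-- `f` is order-reversing on its domain. -/
def IsOR {n : ℕ} (f : PT n) : Prop :=
  ∀ x y a b, f x = some a → f y = some b → x ≤ y → b ≤ a


namespace S15


def NC (f : ℕ → Option ℕ) : Prop :=
  ∀ x y a b, f x = some a → f y = some b → Nat.dist a b ≤ Nat.dist x y
def NOP (f : ℕ → Option ℕ) : Prop :=
  ∀ x y a b, f x = some a → f y = some b → x ≤ y → a ≤ b
def NOR (f : ℕ → Option ℕ) : Prop :=
  ∀ x y a b, f x = some a → f y = some b → x ≤ y → b ≤ a
def NIm (f : ℕ → Option ℕ) : Set ℕ := {y | ∃ x, f x = some y}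
def Bdd (n : ℕ) (f : ℕ → Option ℕ) : Prop := ∀ x y, f x = some y → x < n ∧ y < n

lemma nim_finite {n : ℕ} {f : ℕ → Option ℕ} (hb : Bdd n f) : (NIm f).Finite :=
  (Set.finite_Iio n).subset (fun v hv => by obtain ⟨x, hx⟩ := hv; exact (hb x v hx).2)

lemma nim_sub {n : ℕ} {f : ℕ → Option ℕ} (hb : Bdd n f) : NIm f ⊆ Set.Iio n :=
  fun v hv => by obtain ⟨x, hx⟩ := hv; exact (hb x v hx).2

lemma bdd_none {n : ℕ} {f : ℕ → Option ℕ} (hb : Bdd n f) {x : ℕ} (hx : n ≤ x) : f x = none := by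
  cases hfx : f x with
  | none => rfl
  | some v => exact absurd (hb x v hfx).1 (by omega)

lemma ncard_Iio (n : ℕ) : (Set.Iio n).ncard = n := by
  simp [Set.ncard_eq_toFinset_card', Set.toFinset_Iio]

lemma exists_missing {n : ℕ} (s : Set ℕ) (hs : s ⊆ Set.Iio n) (h : s.ncard < n) :
    ∃ v, v < n ∧ v ∉ s := by
  by_contra hc
  push_neg at hc
  have h2 : Set.Iio n ⊆ s := fun v hv => hc v hv
  rw [subset_antisymm hs h2, ncard_Iio] at h
  omega

/-- `f` has a one-point extension with a fresh value. -/
def HasExt (n : ℕ) (f : ℕ → Option ℕ) : Prop :=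
  ∃ xs e, xs < n ∧ e < n ∧ f xs = none ∧ e ∉ NIm f ∧
    NC (fun x => if x = xs then some e else f x) ∧
    NOP (fun x => if x = xs then some e else f x)

/-- Lemma B: if `f` admits a one-point extension with a new value, it factors. -/
lemma lemB {n p : ℕ} {f : ℕ → Option ℕ} (hp2 : p + 2 ≤ n)
    (hb : Bdd n f) (him : (NIm f).ncard = p) (hext : HasExt n f) :
    ∃ β γ, Bdd n β ∧ NC β ∧ NOP β ∧ Bdd n γ ∧ NC γ ∧ NOP γ ∧
      (NIm β).ncard = p + 1 ∧ (NIm γ).ncard = p + 1 ∧ ∀ x, (β x).bind γ = f x := by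
  classical
  obtain ⟨xs, e, hxs, he, hfxs, henew, hcb, hopb⟩ := hext
  set β : ℕ → Option ℕ := fun x => if x = xs then some e else f x with hβ
  have himβ : NIm β = insert e (NIm f) := by
    ext v
    constructor
    · rintro ⟨x, hx⟩
      simp only [hβ] at hx
      by_cases hxx : x = xs
      · rw [if_pos hxx] at hx
        exact Or.inl (by injection hx with h; exact h.symm)
      · rw [if_neg hxx] at hx
        exact Or.inr ⟨x, hx⟩
    · rintro (hv | ⟨x, hx⟩)
      · exact ⟨xs, by simp only [hβ, if_pos rfl, hv]⟩
      · refine ⟨x, ?_⟩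
        have hxx : x ≠ xs := fun hh => by rw [hh, hfxs] at hx; simp at hx
        simp only [hβ, if_neg hxx]; exact hx
  have hβb : Bdd n β := by
    intro x v hxv
    simp only [hβ] at hxv
    by_cases hxx : x = xs
    · rw [if_pos hxx] at hxv; injection hxv with h; omega
    · rw [if_neg hxx] at hxv; exact hb x v hxv
  have hfin : (NIm f).Finite := nim_finite hb
  have hcard : (insert e (NIm f)).ncard = p + 1 := by
    rw [Set.ncard_insert_of_notMem henew hfin, him]
  obtain ⟨z, hzn, hznot⟩ : ∃ v, v < n ∧ v ∉ insert e (NIm f) := by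
    apply exists_missing _ (by
      intro v hv
      rcases hv with hv | hv
      · simpa [hv] using he
      · exact nim_sub hb hv)
    omega
  set γ : ℕ → Option ℕ := fun v => if v ∈ insert z (NIm f) then some v else none with hγ
  have hγspec : ∀ v b, γ v = some b → b = v ∧ v ∈ insert z (NIm f) := by
    intro v b hv
    simp only [hγ] at hv
    split at hv
    · exact ⟨by injection hv with h; exact h.symm, by assumption⟩
    · simp at hv
  have himγ : NIm γ = insert z (NIm f) := by
    ext v
    constructor
    · rintro ⟨x, hx⟩
      obtain ⟨hbv, hmem⟩ := hγspec x v hx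
      rwa [hbv]
    · intro hv
      exact ⟨v, by simp only [hγ, if_pos hv]⟩
  refine ⟨β, γ, hβb, hcb, hopb, ?_, ?_, ?_, ?_, ?_, ?_⟩
  · intro x v hxv
    obtain ⟨hbv, hmem⟩ := hγspec x v hxv
    subst hbv
    rcases Set.mem_insert_iff.mp hmem with h | h
    · subst h; exact ⟨hzn, hzn⟩
    · exact ⟨(nim_sub hb h), (nim_sub hb h)⟩
  · intro x y a b hxa hyb
    obtain ⟨h1, _⟩ := hγspec x a hxa
    obtain ⟨h2, _⟩ := hγspec y b hyb
    subst h1; subst h2; exact le_rfl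
  · intro x y a b hxa hyb hxy
    obtain ⟨h1, _⟩ := hγspec x a hxa
    obtain ⟨h2, _⟩ := hγspec y b hyb
    omega
  · rw [himβ]; exact hcard
  · rw [himγ, Set.ncard_insert_of_notMem (fun h => hznot (Or.inr h)) hfin, him]
  · intro x
    by_cases hxx : x = xs
    · subst hxx
      simp only [hβ, if_pos rfl, hfxs, Option.bind_some]
      simp only [hγ]
      rw [if_neg]
      intro h
      rcases Set.mem_insert_iff.mp h with h | h
      · exact hznot (Set.mem_insert_iff.mpr (Or.inl h.symm))
      · exact henew h
    · simp only [hβ, if_neg hxx]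
      cases hfx : f x with
      | none => rfl
      | some v =>
        simp only [Option.bind_some, hγ]
        rw [if_pos (Set.mem_insert_of_mem _ (show v ∈ NIm f from ⟨x, hfx⟩))]


lemma dist_eq (a b : ℕ) : Nat.dist a b = a - b + (b - a) := by simp [Nat.dist]

/-- Lemma A: a repeated value and all values ≤ n-2 : shift construction. -/
lemma lemA {n p : ℕ} {f : ℕ → Option ℕ} (hp2 : p + 2 ≤ n)
    (hb : Bdd n f) (hc : NC f) (hop : NOP f) (him : (NIm f).ncard = p)
    {x0 x1 a : ℕ} (hx01 : x0 < x1) (hfx0 : f x0 = some a) (hfx1 : f x1 = some a)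
    (hM : ∀ v ∈ NIm f, v + 2 ≤ n) :
    ∃ β γ, Bdd n β ∧ NC β ∧ NOP β ∧ Bdd n γ ∧ NC γ ∧ NOP γ ∧
      (NIm β).ncard = p + 1 ∧ (NIm γ).ncard = p + 1 ∧ ∀ x, (β x).bind γ = f x := by
  classical
  have haA : a ∈ NIm f := ⟨x0, hfx0⟩
  have han : a + 2 ≤ n := hM a haA
  have hfin : (NIm f).Finite := nim_finite hb
  have hlow : ∀ x u, f x = some u → x ≤ x0 → u ≤ a := fun x u hx hxx => hop x x0 u a hx hfx0 hxx
  have hhigh : ∀ x u, f x = some u → x0 < x → a ≤ u := fun x u hx hxx => hop x0 x a u hfx0 hx (le_of_lt hxx)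
  -- β
  set β : ℕ → Option ℕ := fun x => if x ≤ x0 then f x else (f x).map (· + 1) with hβ
  have hβspec : ∀ x u, β x = some u →
      ∃ v, f x = some v ∧ ((x ≤ x0 ∧ u = v) ∨ (x0 < x ∧ u = v + 1)) := by
    intro x u hx
    simp only [hβ] at hx
    by_cases hxx : x ≤ x0
    · rw [if_pos hxx] at hx; exact ⟨u, hx, Or.inl ⟨hxx, rfl⟩⟩
    · rw [if_neg hxx] at hx
      cases hfx : f x with
      | none => rw [hfx] at hx; simp at hx
      | some v =>
        rw [hfx] at hx
        simp only [Option.map_some] at hx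
        exact ⟨v, rfl, Or.inr ⟨by omega, by injection hx with h; omega⟩⟩
  have hβ_le : ∀ x, x ≤ x0 → β x = f x := fun x hx => by simp only [hβ, if_pos hx]
  have hβ_gt : ∀ x v, x0 < x → f x = some v → β x = some (v + 1) := by
    intro x v hx hfx
    simp only [hβ, if_neg (by omega : ¬ x ≤ x0), hfx, Option.map_some]
  have hβb : Bdd n β := by
    intro x u hx
    obtain ⟨v, hfx, hcase⟩ := hβspec x u hx
    have h1 := hb x v hfx
    have h2 := hM v ⟨x, hfx⟩
    omega
  have hβop : NOP β := by
    intro x y u u' h1 h2 hxy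
    obtain ⟨v, hfx, hcx⟩ := hβspec x u h1
    obtain ⟨v', hfy, hcy⟩ := hβspec y u' h2
    have hvv := hop x y v v' hfx hfy hxy
    have hv'a : x0 < y → a ≤ v' := hhigh y v' hfy
    have hva : x ≤ x0 → v ≤ a := hlow x v hfx
    rcases hcx with ⟨hx1, hx2⟩ | ⟨hx1, hx2⟩ <;> rcases hcy with ⟨hy1, hy2⟩ | ⟨hy1, hy2⟩ <;> omega
  -- key slack estimate across the cut
  have hkey : ∀ x y u u', x ≤ x0 → x0 < y → f x = some u → f y = some u' →
      u' + 1 ≤ u + (y - x) := by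
    intro x y u u' hx hy hfx hfy
    have hua : u ≤ a := hlow x u hfx hx
    have hau' : a ≤ u' := hhigh y u' hfy hy
    have d1 := hc x x0 u a hfx hfx0
    rw [dist_eq, dist_eq] at d1
    by_cases hyx1 : y ≤ x1
    · have : u' ≤ a := hop y x1 u' a hfy hfx1 hyx1
      omega
    · have d2 := hc x1 y a u' hfx1 hfy
      rw [dist_eq, dist_eq] at d2
      omega
  have hβc : NC β := by
    intro x y u u' h1 h2
    obtain ⟨v, hfx, hcx⟩ := hβspec x u h1
    obtain ⟨v', hfy, hcy⟩ := hβspec y u' h2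
    have hd := hc x y v v' hfx hfy
    rw [dist_eq, dist_eq] at hd
    rw [dist_eq, dist_eq]
    rcases hcx with ⟨hx1, hx2⟩ | ⟨hx1, hx2⟩ <;> rcases hcy with ⟨hy1, hy2⟩ | ⟨hy1, hy2⟩
    · omega
    · have := hkey x y v v' hx1 hy1 hfx hfy; omega
    · have := hkey y x v' v hy1 hx1 hfy hfx; omega
    · omega
  -- image of β
  have himβ : NIm β = (NIm f ∩ Set.Iic a) ∪ (fun v => v + 1) '' (NIm f ∩ Set.Ici a) := by
    ext u
    constructor
    · rintro ⟨x, hx⟩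
      obtain ⟨v, hfx, hcase⟩ := hβspec x u hx
      rcases hcase with ⟨hx1, hx2⟩ | ⟨hx1, hx2⟩
      · subst hx2
        exact Or.inl ⟨⟨x, hfx⟩, Set.mem_Iic.mpr (hlow x _ hfx hx1)⟩
      · subst hx2
        exact Or.inr ⟨v, ⟨⟨x, hfx⟩, Set.mem_Ici.mpr (hhigh x v hfx hx1)⟩, rfl⟩
    · rintro (⟨⟨x, hfx⟩, hua⟩ | ⟨v, ⟨⟨x, hfx⟩, hva⟩, hv1⟩)
      · simp only [Set.mem_Iic] at hua
        by_cases hxx : x ≤ x0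
        · exact ⟨x, by rw [hβ_le x hxx]; exact hfx⟩
        · have : a ≤ u := hhigh x u hfx (by omega)
          have hu : u = a := by omega
          exact ⟨x0, by rw [hβ_le x0 le_rfl, hfx0, hu]⟩
      · simp only [Set.mem_Ici] at hva
        by_cases hxx : x0 < x
        · refine ⟨x, ?_⟩
          rw [hβ_gt x v hxx hfx]
          exact congrArg some hv1
        · have : v ≤ a := hlow x v hfx (by omega)
          have hv : v = a := by omega
          refine ⟨x1, ?_⟩
          rw [hβ_gt x1 a hx01 hfx1]
          subst hv
          exact congrArg some hv1
  have hcardβ : (NIm β).ncard = p + 1 := by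
    rw [himβ]
    have hfin1 : (NIm f ∩ Set.Iic a).Finite := hfin.subset Set.inter_subset_left
    have hfin2 : (NIm f ∩ Set.Ici a).Finite := hfin.subset Set.inter_subset_left
    have hu : (NIm f ∩ Set.Iic a) ∪ (NIm f ∩ Set.Ici a) = NIm f := by
      ext v; simp only [Set.mem_union, Set.mem_inter_iff, Set.mem_Iic, Set.mem_Ici]
      constructor
      · rintro (⟨h, _⟩ | ⟨h, _⟩) <;> exact h
      · intro h; by_cases hva : v ≤ a
        · exact Or.inl ⟨h, hva⟩
        · exact Or.inr ⟨h, by omega⟩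
    have hi : (NIm f ∩ Set.Iic a) ∩ (NIm f ∩ Set.Ici a) = {a} := by
      ext v; simp only [Set.mem_inter_iff, Set.mem_Iic, Set.mem_Ici, Set.mem_singleton_iff]
      constructor
      · rintro ⟨⟨_, h1⟩, ⟨_, h2⟩⟩; omega
      · rintro rfl; exact ⟨⟨haA, le_rfl⟩, ⟨haA, le_rfl⟩⟩
    have hsum := Set.ncard_union_add_ncard_inter (NIm f ∩ Set.Iic a) (NIm f ∩ Set.Ici a) hfin1 hfin2
    rw [hu, hi, him, Set.ncard_singleton] at hsum
    have hdisj : Disjoint (NIm f ∩ Set.Iic a) ((fun v => v + 1) '' (NIm f ∩ Set.Ici a)) := by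
      rw [Set.disjoint_left]
      rintro v ⟨_, hv1⟩ ⟨u, ⟨_, hu1⟩, hu2⟩
      simp only [Set.mem_Iic] at hv1
      simp only [Set.mem_Ici] at hu1
      simp only at hu2
      omega
    rw [Set.ncard_union_eq hdisj hfin1 (hfin2.image _),
      Set.ncard_image_of_injective _ (add_left_injective 1)]
    omega
  -- choose the extra pair (z, w)
  obtain ⟨z, w, hwA, hzw⟩ : ∃ z w, w ∉ NIm f ∧
      ((z = w ∧ w < a) ∨ (z = w + 1 ∧ a < w ∧ w + 2 ≤ n)) := by
    by_cases hlm : ∃ v, v < a ∧ v ∉ NIm f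
    · obtain ⟨v, hv1, hv2⟩ := hlm
      exact ⟨v, v, hv2, Or.inl ⟨rfl, hv1⟩⟩
    · push_neg at hlm
      obtain ⟨v, hvn, hv⟩ : ∃ v, v < n ∧ v ∉ NIm f ∪ {n - 1} := by
        apply exists_missing
        · intro v hv
          rcases hv with hv | hv
          · exact nim_sub hb hv
          · simp only [Set.mem_singleton_iff] at hv; simp [Set.mem_Iio]; omega
        · calc (NIm f ∪ {n - 1}).ncard ≤ (NIm f).ncard + ({n - 1} : Set ℕ).ncard :=
                Set.ncard_union_le _ _
            _ < n := by rw [him, Set.ncard_singleton]; omega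
      have hvA : v ∉ NIm f := fun h => hv (Or.inl h)
      have hvn1 : v ≠ n - 1 := fun h => hv (Or.inr h)
      have hva : a < v := by
        rcases lt_trichotomy v a with h | h | h
        · exact absurd (hlm v h) hvA
        · exact absurd (h ▸ haA) hvA
        · exact h
      exact ⟨v + 1, v, hvA, Or.inr ⟨rfl, hva, by omega⟩⟩
  -- γ
  set γ : ℕ → Option ℕ := fun v =>
    if ∃ x, x ≤ x0 ∧ f x = some v then some v
    else if ∃ x u, x0 < x ∧ f x = some u ∧ v = u + 1 then some (v - 1)
    else if v = z then some w else none with hγ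
  have hγspec : ∀ v b, γ v = some b →
      ((∃ x, x ≤ x0 ∧ f x = some v) ∧ b = v) ∨
      (∃ u, (∃ x, x0 < x ∧ f x = some u) ∧ v = u + 1 ∧ b = u) ∨ (v = z ∧ b = w) := by
    intro v b hv
    simp only [hγ] at hv
    split at hv
    · exact Or.inl ⟨by assumption, by injection hv with h; omega⟩
    · split at hv
      · rename_i h2
        obtain ⟨x, u, hx1, hx2, hx3⟩ := h2
        refine Or.inr (Or.inl ⟨u, ⟨x, hx1, hx2⟩, hx3, by injection hv with h; omega⟩)
      · split at hv
        · exact Or.inr (Or.inr ⟨by assumption, by injection hv with h; omega⟩)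
        · simp at hv
  -- order shape of γ
  have hγshape : ∀ v b, γ v = some b → (b = v ∧ v ≤ a) ∨ (v = b + 1 ∧ a ≤ b) := by
    intro v b hv
    rcases hγspec v b hv with ⟨⟨x, hx1, hx2⟩, hb1⟩ | ⟨u, ⟨x, hx1, hx2⟩, hv1, hb1⟩ | ⟨hv1, hb1⟩
    · exact Or.inl ⟨hb1, hb1 ▸ hlow x v hx2 hx1⟩
    · exact Or.inr ⟨by omega, hb1 ▸ hhigh x u hx2 hx1⟩
    · rcases hzw with ⟨h1, h2⟩ | ⟨h1, h2, h3⟩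
      · exact Or.inl ⟨by omega, by omega⟩
      · exact Or.inr ⟨by omega, by omega⟩
  have hγc : NC γ := by
    intro v v' b b' h1 h2
    rw [dist_eq, dist_eq]
    rcases hγshape v b h1 with ⟨hx1, hx2⟩ | ⟨hx1, hx2⟩ <;>
      rcases hγshape v' b' h2 with ⟨hy1, hy2⟩ | ⟨hy1, hy2⟩ <;> omega
  have hγop : NOP γ := by
    intro v v' b b' h1 h2 hvv
    rcases hγshape v b h1 with ⟨hx1, hx2⟩ | ⟨hx1, hx2⟩ <;>
      rcases hγshape v' b' h2 with ⟨hy1, hy2⟩ | ⟨hy1, hy2⟩ <;> omega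
  have hγb : Bdd n γ := by
    intro v b hv
    rcases hγspec v b hv with ⟨⟨x, hx1, hx2⟩, hb1⟩ | ⟨u, ⟨x, hx1, hx2⟩, hv1, hb1⟩ | ⟨hv1, hb1⟩
    · have := hb x v hx2; omega
    · have := hM u ⟨x, hx2⟩; omega
    · rcases hzw with ⟨h1, h2⟩ | ⟨h1, h2, h3⟩ <;> omega
  -- first two branch conditions fail at z
  have hz1 : ¬∃ x, x ≤ x0 ∧ f x = some z := by
    rintro ⟨x, hx1, hx2⟩
    have := hlow x z hx2 hx1
    rcases hzw with ⟨h1, h2⟩ | ⟨h1, h2, h3⟩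
    · exact hwA (h1 ▸ ⟨x, hx2⟩)
    · omega
  have hz2 : ¬∃ x u, x0 < x ∧ f x = some u ∧ z = u + 1 := by
    rintro ⟨x, u, hx1, hx2, hx3⟩
    have := hhigh x u hx2 hx1
    rcases hzw with ⟨h1, h2⟩ | ⟨h1, h2, h3⟩
    · omega
    · have : u = w := by omega
      exact hwA (this ▸ ⟨x, hx2⟩)
  have hγz : γ z = some w := by
    simp only [hγ]
    rw [if_neg hz1, if_neg hz2]
    simp
  have himγ : NIm γ = insert w (NIm f) := by
    ext b
    constructor
    · rintro ⟨v, hv⟩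
      rcases hγspec v b hv with ⟨⟨x, hx1, hx2⟩, hb1⟩ | ⟨u, ⟨x, hx1, hx2⟩, hv1, hb1⟩ | ⟨hv1, hb1⟩
      · exact Or.inr (hb1 ▸ ⟨x, hx2⟩)
      · exact Or.inr (hb1 ▸ ⟨x, hx2⟩)
      · exact Or.inl hb1
    · rintro (hbw | ⟨x, hx⟩)
      · exact ⟨z, by rw [hγz, hbw]⟩
      · by_cases hxx : x ≤ x0
        · exact ⟨b, by simp only [hγ]; rw [if_pos ⟨x, hxx, hx⟩]⟩
        · have hab : a ≤ b := hhigh x b hx (by omega)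
          refine ⟨b + 1, ?_⟩
          simp only [hγ]
          rw [if_neg, if_pos ⟨x, b, by omega, hx, rfl⟩]
          · simp
          · rintro ⟨x', hx1', hx2'⟩
            have := hlow x' (b + 1) hx2' hx1'
            omega
  have hcardγ : (NIm γ).ncard = p + 1 := by
    rw [himγ, Set.ncard_insert_of_notMem hwA hfin, him]
  refine ⟨β, γ, hβb, hβc, hβop, hγb, hγc, hγop, hcardβ, hcardγ, ?_⟩
  intro x
  by_cases hxx : x ≤ x0
  · rw [hβ_le x hxx]
    cases hfx : f x with
    | none => rfl
    | some v =>
      simp only [Option.bind_some, hγ]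
      rw [if_pos ⟨x, hxx, hfx⟩]
  · cases hfx : f x with
    | none => simp only [hβ, if_neg hxx, hfx, Option.map_none, Option.bind_none]
    | some v =>
      rw [hβ_gt x v (by omega) hfx]
      simp only [Option.bind_some, hγ]
      rw [if_neg, if_pos ⟨x, v, by omega, hfx, rfl⟩]
      · simp
      · rintro ⟨x', hx1', hx2'⟩
        have h1 := hlow x' (v + 1) hx2' hx1'
        have h2 := hhigh x v hfx (by omega)
        omega

/-- Lemma C: injective case with a slack cut point. -/
lemma lemC {n p : ℕ} {f : ℕ → Option ℕ} (hp2 : p + 2 ≤ n)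
    (hb : Bdd n f) (hc : NC f) (hop : NOP f) (him : (NIm f).ncard = p)
    (hinj : ∀ x y u, f x = some u → f y = some u → x = y)
    {c d : ℕ} (hdc : d < c) (hcn : c < n) (hfc : f c = none) (hfd : f d = none)
    (hslack : ∀ x y u v, f x = some u → f y = some v → x < c → c < y → v + x < u + y)
    {Mv t : ℕ} (hMA : f t = some Mv) (hMmax : ∀ v ∈ NIm f, v ≤ Mv) (hMn : Mv + 2 ≤ n)
    (htmax : ∀ x y, f x = some y → x ≤ t) :
    ∃ β γ, Bdd n β ∧ NC β ∧ NOP β ∧ Bdd n γ ∧ NC γ ∧ NOP γ ∧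
      (NIm β).ncard = p + 1 ∧ (NIm γ).ncard = p + 1 ∧ ∀ x, (β x).bind γ = f x := by
  classical
  have hfin : (NIm f).Finite := nim_finite hb
  have htn : t < n := (hb t Mv hMA).1
  -- β
  set β : ℕ → Option ℕ := fun x =>
    if x = d then some d else (f x).bind (fun _ => if x < c then some x else some (x - 1)) with hβ
  have hβspec : ∀ x u, β x = some u →
      (x = d ∧ u = d) ∨ ((∃ v, f x = some v) ∧ ((x < c ∧ u = x) ∨ (c < x ∧ u + 1 = x))) := by
    intro x u hx
    simp only [hβ] at hx
    by_cases hxd : x = d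
    · rw [if_pos hxd] at hx
      exact Or.inl ⟨hxd, by injection hx with h; omega⟩
    · rw [if_neg hxd] at hx
      cases hfx : f x with
      | none => rw [hfx] at hx; simp at hx
      | some v =>
        rw [hfx] at hx
        simp only [Option.bind_some] at hx
        have hxc : x ≠ c := fun h => by rw [h, hfc] at hfx; simp at hfx
        by_cases hlt : x < c
        · rw [if_pos hlt] at hx
          exact Or.inr ⟨⟨v, rfl⟩, Or.inl ⟨hlt, by injection hx with h; omega⟩⟩
        · rw [if_neg hlt] at hx
          exact Or.inr ⟨⟨v, rfl⟩, Or.inr ⟨by omega, by injection hx with h; omega⟩⟩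
  have hβshape : ∀ x u, β x = some u → (x < c ∧ u = x) ∨ (c < x ∧ u + 1 = x) := by
    intro x u hx
    rcases hβspec x u hx with ⟨h1, h2⟩ | ⟨_, h⟩
    · exact Or.inl ⟨by omega, by omega⟩
    · exact h
  have hβb : Bdd n β := by
    intro x u hx
    rcases hβspec x u hx with ⟨h1, h2⟩ | ⟨⟨v, hv⟩, h⟩
    · omega
    · have := (hb x v hv).1; omega
  have hβop : NOP β := by
    intro x y u u' h1 h2 hxy
    rcases hβshape x u h1 with ⟨ha1, ha2⟩ | ⟨ha1, ha2⟩ <;>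
      rcases hβshape y u' h2 with ⟨hb1, hb2⟩ | ⟨hb1, hb2⟩ <;> omega
  have hβc : NC β := by
    intro x y u u' h1 h2
    rw [dist_eq, dist_eq]
    rcases hβshape x u h1 with ⟨ha1, ha2⟩ | ⟨ha1, ha2⟩ <;>
      rcases hβshape y u' h2 with ⟨hb1, hb2⟩ | ⟨hb1, hb2⟩ <;> omega
  -- image of β
  set Dom : Set ℕ := {x | ∃ v, f x = some v} with hDom
  have hDomfin : Dom.Finite := (Set.finite_Iio n).subset (fun x hx => by
    obtain ⟨v, hv⟩ := hx; exact (hb x v hv).1)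
  have hDomcard : Dom.ncard = p := by
    have himg : (fun x => (f x).getD 0) '' Dom = NIm f := by
      ext v
      constructor
      · rintro ⟨x, ⟨u, hu⟩, hx⟩
        simp only [hu, Option.getD_some] at hx
        exact ⟨x, hx ▸ hu⟩
      · rintro ⟨x, hx⟩
        exact ⟨x, ⟨v, hx⟩, by simp [hx]⟩
    have hinjon : Set.InjOn (fun x => (f x).getD 0) Dom := by
      rintro x ⟨u, hu⟩ y ⟨v, hv⟩ hxy
      simp only [hu, hv, Option.getD_some] at hxy
      exact hinj x y u (by rw [hu]) (by rw [hv, hxy])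
    rw [← him, ← himg, Set.ncard_image_of_injOn hinjon]
  have hdnotDom : d ∉ Dom := fun ⟨v, hv⟩ => by rw [hfd] at hv; simp at hv
  have hcnotDom : c ∉ Dom := fun ⟨v, hv⟩ => by rw [hfc] at hv; simp at hv
  have himβ : NIm β = (Dom ∩ Set.Iio c) ∪ {d} ∪ (fun x => x - 1) '' (Dom ∩ Set.Ioi c) := by
    ext u
    constructor
    · rintro ⟨x, hx⟩
      rcases hβspec x u hx with ⟨h1, h2⟩ | ⟨⟨v, hv⟩, ⟨h1, h2⟩ | ⟨h1, h2⟩⟩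
      · subst h2; exact Or.inl (Or.inr rfl)
      · subst h2
        exact Or.inl (Or.inl ⟨⟨v, hv⟩, Set.mem_Iio.mpr h1⟩)
      · refine Or.inr ⟨x, ⟨⟨v, hv⟩, Set.mem_Ioi.mpr h1⟩, ?_⟩
        show x - 1 = u
        omega
    · rintro ((⟨hu1, hu2⟩ | hu) | ⟨x, ⟨hx1, hx2⟩, hx3⟩)
      · simp only [Set.mem_Iio] at hu2
        obtain ⟨v, hv⟩ := hu1
        have hud : u ≠ d := fun h => hdnotDom (h ▸ (⟨v, hv⟩ : ∃ w, f u = some w))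
        refine ⟨u, ?_⟩
        simp only [hβ, if_neg hud, hv, Option.bind_some, if_pos hu2]
      · simp only [Set.mem_singleton_iff] at hu
        exact ⟨d, by simp only [hβ, if_pos rfl, hu]⟩
      · simp only [Set.mem_Ioi] at hx2
        obtain ⟨v, hv⟩ := hx1
        have hxd : x ≠ d := by omega
        refine ⟨x, ?_⟩
        simp only [hβ, if_neg hxd, hv, Option.bind_some, if_neg (by omega : ¬ x < c)]
        exact congrArg some hx3
  have hcardβ : (NIm β).ncard = p + 1 := by
    rw [himβ]
    have hf1 : (Dom ∩ Set.Iio c).Finite := hDomfin.subset Set.inter_subset_left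
    have hf2 : (Dom ∩ Set.Ioi c).Finite := hDomfin.subset Set.inter_subset_left
    have hsplit : (Dom ∩ Set.Iio c) ∪ (Dom ∩ Set.Ioi c) = Dom := by
      ext x
      simp only [Set.mem_union, Set.mem_inter_iff, Set.mem_Iio, Set.mem_Ioi]
      constructor
      · rintro (⟨h, _⟩ | ⟨h, _⟩) <;> exact h
      · intro h
        rcases lt_trichotomy x c with h1 | h1 | h1
        · exact Or.inl ⟨h, h1⟩
        · exact absurd (h1 ▸ h) hcnotDom
        · exact Or.inr ⟨h, h1⟩
    have hdisj0 : Disjoint (Dom ∩ Set.Iio c) (Dom ∩ Set.Ioi c) := by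
      rw [Set.disjoint_left]
      rintro x ⟨_, h1⟩ ⟨_, h2⟩
      simp only [Set.mem_Iio] at h1
      simp only [Set.mem_Ioi] at h2
      omega
    have hsum : (Dom ∩ Set.Iio c).ncard + (Dom ∩ Set.Ioi c).ncard = p := by
      rw [← Set.ncard_union_eq hdisj0 hf1 hf2, hsplit, hDomcard]
    have hinjon : Set.InjOn (fun x => x - 1) (Dom ∩ Set.Ioi c) := by
      rintro x ⟨_, hx⟩ y ⟨_, hy⟩ hxy
      simp only [Set.mem_Ioi] at hx hy
      simp only at hxy
      omega
    have hdisj1 : Disjoint ((Dom ∩ Set.Iio c) ∪ {d}) ((fun x => x - 1) '' (Dom ∩ Set.Ioi c)) := by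
      rw [Set.disjoint_left]
      rintro u hu ⟨x, ⟨_, hx2⟩, hx3⟩
      simp only [Set.mem_Ioi] at hx2
      simp only at hx3
      have huc : u < c := by
        rcases hu with ⟨_, h⟩ | h
        · simpa [Set.mem_Iio] using h
        · simp only [Set.mem_singleton_iff] at h; omega
      omega
    have hdisj2 : Disjoint (Dom ∩ Set.Iio c) ({d} : Set ℕ) := by
      rw [Set.disjoint_left]
      rintro x ⟨hx, _⟩ h
      simp only [Set.mem_singleton_iff] at h
      exact hdnotDom (h ▸ hx)
    rw [Set.ncard_union_eq hdisj1 ((hf1.union (Set.finite_singleton d))) (hf2.image _),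
      Set.ncard_union_eq hdisj2 hf1 (Set.finite_singleton d),
      Set.ncard_image_of_injOn hinjon, Set.ncard_singleton]
    omega
  -- γ
  set γ : ℕ → Option ℕ := fun v =>
    if v = n - 1 then some (Mv + 1) else if v < c then f v else f (v + 1) with hγ
  have hγspec : ∀ v b, γ v = some b →
      (v = n - 1 ∧ b = Mv + 1) ∨ (v ≠ n - 1 ∧ v < c ∧ f v = some b) ∨
      (v ≠ n - 1 ∧ c ≤ v ∧ f (v + 1) = some b) := by
    intro v b hv
    simp only [hγ] at hv
    by_cases h1 : v = n - 1
    · rw [if_pos h1] at hv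
      exact Or.inl ⟨h1, by injection hv with h; omega⟩
    · rw [if_neg h1] at hv
      by_cases h2 : v < c
      · rw [if_pos h2] at hv; exact Or.inr (Or.inl ⟨h1, h2, hv⟩)
      · rw [if_neg h2] at hv; exact Or.inr (Or.inr ⟨h1, by omega, hv⟩)
  have hγb : Bdd n γ := by
    intro v b hv
    rcases hγspec v b hv with ⟨h1, h2⟩ | ⟨h1, h2, h3⟩ | ⟨h1, h2, h3⟩
    · omega
    · have := hb v b h3; omega
    · have := hb (v + 1) b h3; omega
  have hγop : NOP γ := by
    intro v v' b b' h1 h2 hvv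
    rcases hγspec v b h1 with ⟨ha1, ha2⟩ | ⟨ha1, ha2, ha3⟩ | ⟨ha1, ha2, ha3⟩ <;>
      rcases hγspec v' b' h2 with ⟨hb1, hb2⟩ | ⟨hb1, hb2, hb3⟩ | ⟨hb1, hb2, hb3⟩
    · omega
    · have := (hb v' b' hb3).1; omega
    · have := (hb (v' + 1) b' hb3).1; omega
    · have := hMmax b ⟨v, ha3⟩
      omega
    · exact hop v v' b b' ha3 hb3 hvv
    · exact hop v (v' + 1) b b' ha3 hb3 (by omega)
    · have := hMmax b ⟨v + 1, ha3⟩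
      omega
    · omega
    · exact hop (v + 1) (v' + 1) b b' ha3 hb3 (by omega)
  -- distance bound for the top extra point
  have htop : ∀ x u, f x = some u → Mv + 1 ≤ u + (n - 1 - x) + 1 ∧ (x < c → Mv + 1 ≤ u + (n - 1 - x)) := by
    intro x u hx
    have hxt : x ≤ t := htmax x u hx
    have hd := hc x t u Mv hx hMA
    rw [dist_eq, dist_eq] at hd
    have hxn := (hb x u hx).1
    constructor
    · omega
    · intro hxc
      by_cases hct : c < t
      · have := hslack x t u Mv hx hMA hxc hct
        omega
      · have htc : t ≠ c := fun h => by rw [h, hfc] at hMA; simp at hMA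
        omega
  have hγc : NC γ := by
    intro v v' b b' h1 h2
    rw [dist_eq, dist_eq]
    rcases hγspec v b h1 with ⟨ha1, ha2⟩ | ⟨ha1, ha2, ha3⟩ | ⟨ha1, ha2, ha3⟩ <;>
      rcases hγspec v' b' h2 with ⟨hb1, hb2⟩ | ⟨hb1, hb2, hb3⟩ | ⟨hb1, hb2, hb3⟩
    · omega
    · have h3 := hMmax b' ⟨v', hb3⟩
      have h4 := (htop v' b' hb3).2 hb2
      have h5 := (hb v' b' hb3).1
      omega
    · have h3 := hMmax b' ⟨v' + 1, hb3⟩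
      have h4 := (htop (v' + 1) b' hb3).1
      have h5 := (hb (v' + 1) b' hb3).1
      omega
    · have h3 := hMmax b ⟨v, ha3⟩
      have h4 := (htop v b ha3).2 ha2
      have h5 := (hb v b ha3).1
      omega
    · have := hc v v' b b' ha3 hb3
      rw [dist_eq, dist_eq] at this
      omega
    · have hs := hslack v (v' + 1) b b' ha3 hb3 ha2 (by omega)
      have ho := hop v (v' + 1) b b' ha3 hb3 (by omega)
      omega
    · have h3 := hMmax b ⟨v + 1, ha3⟩
      have h4 := (htop (v + 1) b ha3).1
      have h5 := (hb (v + 1) b ha3).1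
      omega
    · have hs := hslack v' (v + 1) b' b hb3 ha3 hb2 (by omega)
      have ho := hop v' (v + 1) b' b hb3 ha3 (by omega)
      omega
    · have := hc (v + 1) (v' + 1) b b' ha3 hb3
      rw [dist_eq, dist_eq] at this
      omega
  have himγ : NIm γ = insert (Mv + 1) (NIm f) := by
    ext b
    constructor
    · rintro ⟨v, hv⟩
      rcases hγspec v b hv with ⟨h1, h2⟩ | ⟨h1, h2, h3⟩ | ⟨h1, h2, h3⟩
      · exact Or.inl h2
      · exact Or.inr ⟨v, h3⟩
      · exact Or.inr ⟨v + 1, h3⟩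
    · rintro (hb1 | ⟨x, hx⟩)
      · exact ⟨n - 1, by simp only [hγ, if_pos rfl, hb1]⟩
      · have hxn := (hb x b hx).1
        have hxc : x ≠ c := fun h => by rw [h, hfc] at hx; simp at hx
        by_cases hlt : x < c
        · refine ⟨x, ?_⟩
          simp only [hγ, if_neg (by omega : ¬ x = n - 1), if_pos hlt]
          exact hx
        · refine ⟨x - 1, ?_⟩
          simp only [hγ, if_neg (by omega : ¬ x - 1 = n - 1), if_neg (by omega : ¬ x - 1 < c)]
          rw [(by omega : x - 1 + 1 = x)]
          exact hx
  have hMv1 : Mv + 1 ∉ NIm f := fun h => by have := hMmax _ h; omega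
  have hcardγ : (NIm γ).ncard = p + 1 := by
    rw [himγ, Set.ncard_insert_of_notMem hMv1 hfin, him]
  refine ⟨β, γ, hβb, hβc, hβop, hγb, hγc, hγop, hcardβ, hcardγ, ?_⟩
  intro x
  by_cases hxd : x = d
  · rw [hxd]
    simp only [hβ, if_pos rfl, Option.bind_some, hγ]
    rw [if_neg (by omega : ¬ d = n - 1), if_pos hdc, hfd]
  · cases hfx : f x with
    | none => simp only [hβ, if_neg hxd, hfx, Option.bind_none]
    | some v =>
      have hxn := (hb x v hfx).1
      have hxc : x ≠ c := fun h => by rw [h, hfc] at hfx; simp at hfx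
      by_cases hlt : x < c
      · simp only [hβ, if_neg hxd, hfx, Option.bind_some, if_pos hlt, hγ,
          if_neg (by omega : ¬ x = n - 1), hfx]
      · simp only [hβ, if_neg hxd, hfx, Option.bind_some, if_neg hlt, hγ,
          if_neg (by omega : ¬ x - 1 = n - 1), if_neg (by omega : ¬ x - 1 < c)]
        rw [(by omega : x - 1 + 1 = x)]
        exact hfx

/-! ### Conjugation by the reversal -/

def Tc (n : ℕ) (f : ℕ → Option ℕ) : ℕ → Option ℕ :=
  fun x => if x < n then (f (n - 1 - x)).map (fun v => n - 1 - v) else none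

lemma Tc_spec {n : ℕ} {f : ℕ → Option ℕ} {x u : ℕ} (h : Tc n f x = some u) :
    x < n ∧ ∃ v, f (n - 1 - x) = some v ∧ u = n - 1 - v := by
  simp only [Tc] at h
  split at h
  · cases hfx : f (n - 1 - x) with
    | none => rw [hfx] at h; simp at h
    | some v =>
      rw [hfx] at h
      simp only [Option.map_some] at h
      exact ⟨by assumption, v, rfl, by injection h with h2; omega⟩
  · simp at h

lemma Tc_eval {n : ℕ} {f : ℕ → Option ℕ} {x v : ℕ} (hx : x < n) (hfx : f (n - 1 - x) = some v) :
    Tc n f x = some (n - 1 - v) := by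
  simp only [Tc, if_pos hx, hfx, Option.map_some]

lemma Tc_bdd {n : ℕ} (f : ℕ → Option ℕ) : Bdd n (Tc n f) := by
  intro x u h
  obtain ⟨hx, v, hv, hu⟩ := Tc_spec h
  constructor
  · exact hx
  · omega

lemma Tc_nc {n : ℕ} {f : ℕ → Option ℕ} (hb : Bdd n f) (hc : NC f) : NC (Tc n f) := by
  intro x y a b h1 h2
  obtain ⟨hx, v, hv, ha⟩ := Tc_spec h1
  obtain ⟨hy, w, hw, hbb⟩ := Tc_spec h2
  have hd := hc _ _ _ _ hv hw
  have hv1 := (hb _ _ hv).2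
  have hw1 := (hb _ _ hw).2
  rw [dist_eq, dist_eq] at hd ⊢
  omega

lemma Tc_nop {n : ℕ} {f : ℕ → Option ℕ} (hb : Bdd n f) (hop : NOP f) : NOP (Tc n f) := by
  intro x y a b h1 h2 hxy
  obtain ⟨hx, v, hv, ha⟩ := Tc_spec h1
  obtain ⟨hy, w, hw, hbb⟩ := Tc_spec h2
  have := hop _ _ _ _ hw hv (by omega)
  have hv1 := (hb _ _ hv).2
  have hw1 := (hb _ _ hw).2
  omega

lemma Tc_im {n : ℕ} {f : ℕ → Option ℕ} (hb : Bdd n f) :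
    NIm (Tc n f) = (fun v => n - 1 - v) '' NIm f := by
  ext u
  constructor
  · rintro ⟨x, hx⟩
    obtain ⟨hxn, v, hv, hu⟩ := Tc_spec hx
    exact ⟨v, ⟨_, hv⟩, hu.symm⟩
  · rintro ⟨v, ⟨x, hx⟩, hv⟩
    have hxn := (hb _ _ hx).1
    refine ⟨n - 1 - x, ?_⟩
    rw [Tc_eval (by omega) (by rw [(by omega : n - 1 - (n - 1 - x) = x)]; exact hx)]
    rw [← hv]

lemma Tc_im_ncard {n : ℕ} {f : ℕ → Option ℕ} (hb : Bdd n f) :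
    (NIm (Tc n f)).ncard = (NIm f).ncard := by
  rw [Tc_im hb]
  apply Set.ncard_image_of_injOn
  intro a ha b hbb hab
  have h1 := nim_sub hb ha
  have h2 := nim_sub hb hbb
  simp only [Set.mem_Iio] at h1 h2
  simp only at hab
  omega

lemma Tc_Tc {n : ℕ} {f : ℕ → Option ℕ} (hb : Bdd n f) : Tc n (Tc n f) = f := by
  funext x
  by_cases hx : x < n
  · cases hfx : f x with
    | none =>
      simp only [Tc, if_pos hx, if_pos (show n - 1 - x < n by omega)]
      rw [(by omega : n - 1 - (n - 1 - x) = x), hfx]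
      rfl
    | some v =>
      have hvn := (hb _ _ hfx).2
      have h1 : Tc n f (n - 1 - x) = some (n - 1 - v) := by
        rw [Tc_eval (by omega) (by rw [(by omega : n - 1 - (n - 1 - x) = x)]; exact hfx)]
      rw [Tc_eval hx h1]
      congr 1
      omega
  · rw [bdd_none hb (by omega), Tc]
    rw [if_neg hx]

lemma Tc_comp {n : ℕ} {β γ : ℕ → Option ℕ} (hbβ : Bdd n β) :
    (fun x => (Tc n β x).bind (Tc n γ)) = Tc n (fun x => (β x).bind γ) := by
  funext x
  by_cases hx : x < n
  · cases hfx : β (n - 1 - x) with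
    | none =>
      simp only [Tc, if_pos hx, hfx, Option.map_none, Option.bind_none]
    | some v =>
      have hvn := (hbβ _ _ hfx).2
      rw [Tc_eval hx hfx]
      simp only [Option.bind_some, Tc, if_pos hx, hfx, Option.bind_some]
      rw [if_pos (show n - 1 - v < n by omega), (by omega : n - 1 - (n - 1 - v) = v)]
  · simp only [Tc, if_neg hx, Option.bind_none]

lemma Tc_hasExt {n : ℕ} {f : ℕ → Option ℕ} (hn : 1 ≤ n) (hb : Bdd n f)
    (h : HasExt n (Tc n f)) : HasExt n f := by
  obtain ⟨xs, e, hxs, he, hfxs, henew, hcb, hopb⟩ := h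
  refine ⟨n - 1 - xs, n - 1 - e, by omega, by omega, ?_, ?_, ?_, ?_⟩
  · cases hfx : f (n - 1 - xs) with
    | none => rfl
    | some v =>
      exfalso
      rw [Tc_eval hxs hfx] at hfxs
      simp at hfxs
  · rintro ⟨x, hx⟩
    have hxn := (hb _ _ hx).1
    apply henew
    refine ⟨n - 1 - x, ?_⟩
    rw [Tc_eval (by omega) (by rw [(by omega : n - 1 - (n - 1 - x) = x)]; exact hx)]
    congr 1
    omega
  · -- NC of the updated f
    intro x y a b h1 h2
    have hkey : ∀ z w, (if z = n - 1 - xs then some (n - 1 - e) else f z) = some w →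
        z < n ∧ w < n ∧
        (if n - 1 - z = xs then some e else Tc n f (n - 1 - z)) = some (n - 1 - w) := by
      intro z w hz
      by_cases hzz : z = n - 1 - xs
      · rw [if_pos hzz] at hz
        injection hz with hz
        refine ⟨by omega, by omega, ?_⟩
        rw [if_pos (by omega)]
        congr 1
        omega
      · rw [if_neg hzz] at hz
        have hzn := (hb _ _ hz).1
        have hwn := (hb _ _ hz).2
        refine ⟨hzn, hwn, ?_⟩
        rw [if_neg (by omega), Tc_eval (by omega)
          (by rw [(by omega : n - 1 - (n - 1 - z) = z)]; exact hz)]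
    obtain ⟨hxn, han, hx2⟩ := hkey x a h1
    obtain ⟨hyn, hbn, hy2⟩ := hkey y b h2
    have := hcb _ _ _ _ hx2 hy2
    rw [dist_eq, dist_eq] at this ⊢
    omega
  · intro x y a b h1 h2 hxy
    have hkey : ∀ z w, (if z = n - 1 - xs then some (n - 1 - e) else f z) = some w →
        z < n ∧ w < n ∧
        (if n - 1 - z = xs then some e else Tc n f (n - 1 - z)) = some (n - 1 - w) := by
      intro z w hz
      by_cases hzz : z = n - 1 - xs
      · rw [if_pos hzz] at hz
        injection hz with hz
        refine ⟨by omega, by omega, ?_⟩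
        rw [if_pos (by omega)]
        congr 1
        omega
      · rw [if_neg hzz] at hz
        have hzn := (hb _ _ hz).1
        have hwn := (hb _ _ hz).2
        refine ⟨hzn, hwn, ?_⟩
        rw [if_neg (by omega), Tc_eval (by omega)
          (by rw [(by omega : n - 1 - (n - 1 - z) = z)]; exact hz)]
    obtain ⟨hxn, han, hx2⟩ := hkey x a h1
    obtain ⟨hyn, hbn, hy2⟩ := hkey y b h2
    have := hopb _ _ _ _ hy2 hx2 (by omega)
    omega

/-! ### Tight pair across a hole gives an extension -/

lemma tight_ext {n : ℕ} {f : ℕ → Option ℕ} (hb : Bdd n f) (hc : NC f) (hop : NOP f)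
    {c x y u v : ℕ} (hcn : c < n) (hfc : f c = none) (hxc : x < c) (hcy : c < y)
    (hfx : f x = some u) (hfy : f y = some v) (hteq : v + x = u + y) : HasExt n f := by
  have huv : u ≤ v := hop x y u v hfx hfy (by omega)
  have hvn := (hb _ _ hfy).2
  set e := u + (c - x) with he
  have hev : e < v := by omega
  have hrigid : ∀ w z, f w = some z → x ≤ w → w ≤ y → z + x = u + w := by
    intro w z hw h1 h2
    have d1 := hc x w u z hfx hw
    have d2 := hc w y z v hw hfy
    have o1 := hop x w u z hfx hw h1
    have o2 := hop w y z v hw hfy h2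
    rw [dist_eq, dist_eq] at d1 d2
    omega
  have henew : e ∉ NIm f := by
    rintro ⟨w, hw⟩
    rcases le_or_gt w x with h | h
    · have := hop w x e u hw hfx h
      omega
    · rcases le_or_gt y w with h2 | h2
      · have := hop y w v e hfy hw h2
        omega
      · have := hrigid w e hw (by omega) (by omega)
        have hwc : w = c := by omega
        rw [hwc, hfc] at hw
        simp at hw
  have hkey : ∀ w z, f w = some z → Nat.dist e z ≤ Nat.dist c w ∧ (w ≤ c → z ≤ e) ∧ (c ≤ w → e ≤ z) := by
    intro w z hw
    rcases le_or_gt w x with h | h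
    · have ho := hop w x z u hw hfx h
      have hd := hc w x z u hw hfx
      rw [dist_eq, dist_eq] at hd ⊢
      refine ⟨by omega, fun _ => by omega, fun h2 => by omega⟩
    · rcases le_or_gt y w with h2 | h2
      · have ho := hop y w v z hfy hw h2
        have hd := hc y w v z hfy hw
        rw [dist_eq, dist_eq] at hd ⊢
        refine ⟨by omega, fun h3 => by omega, fun _ => by omega⟩
      · have := hrigid w z hw (by omega) (by omega)
        rw [dist_eq, dist_eq]
        refine ⟨by omega, fun h3 => by omega, fun h3 => by omega⟩
  refine ⟨c, e, hcn, by omega, hfc, henew, ?_, ?_⟩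
  · intro w w' z z' h1 h2
    simp only [] at h1 h2
    by_cases hw : w = c <;> by_cases hw' : w' = c
    · rw [if_pos hw] at h1
      rw [if_pos hw'] at h2
      injection h1 with h1
      injection h2 with h2
      subst hw; subst hw'
      rw [dist_eq, dist_eq]
      omega
    · rw [if_pos hw] at h1
      rw [if_neg hw'] at h2
      injection h1 with h1
      have := (hkey w' z' h2).1
      subst hw
      rw [dist_eq] at this ⊢
      rw [dist_eq] at this ⊢
      omega
    · rw [if_neg hw] at h1
      rw [if_pos hw'] at h2
      injection h2 with h2
      have := (hkey w z h1).1
      subst hw'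
      rw [dist_eq] at this ⊢
      rw [dist_eq] at this ⊢
      omega
    · rw [if_neg hw] at h1
      rw [if_neg hw'] at h2
      exact hc w w' z z' h1 h2
  · intro w w' z z' h1 h2 hww
    simp only [] at h1 h2
    by_cases hw : w = c <;> by_cases hw' : w' = c
    · rw [if_pos hw] at h1
      rw [if_pos hw'] at h2
      injection h1 with h1
      injection h2 with h2
      omega
    · rw [if_pos hw] at h1
      rw [if_neg hw'] at h2
      injection h1 with h1
      have := (hkey w' z' h2).2.2 (by omega)
      omega
    · rw [if_neg hw] at h1
      rw [if_pos hw'] at h2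
      injection h2 with h2
      have := (hkey w z h1).2.1 (by omega)
      omega
    · rw [if_neg hw] at h1
      rw [if_neg hw'] at h2
      exact hop w w' z z' h1 h2 hww

/-! ### Sandwich: both extremes in the image forces the identity -/

lemma sandwich {n : ℕ} {f : ℕ → Option ℕ} (hn : 3 ≤ n) (hb : Bdd n f) (hc : NC f)
    (hop : NOP f) (h0 : 0 ∈ NIm f) (hN : n - 1 ∈ NIm f) :
    ∀ x v, f x = some v → v = x := by
  obtain ⟨x1, hx1⟩ := h0
  obtain ⟨y1, hy1⟩ := hN
  have hx1n := (hb _ _ hx1).1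
  have hy1n := (hb _ _ hy1).1
  have hd := hc x1 y1 0 (n - 1) hx1 hy1
  rw [dist_eq, dist_eq] at hd
  have hord : x1 < y1 := by
    rcases le_or_gt y1 x1 with h | h
    · have := hop y1 x1 (n - 1) 0 hy1 hx1 h
      omega
    · exact h
  have hx10 : x1 = 0 := by omega
  have hy1N : y1 = n - 1 := by omega
  subst hx10; subst hy1N
  intro x v hx
  have hxn := (hb _ _ hx).1
  have hvn := (hb _ _ hx).2
  have d1 := hc 0 x 0 v hx1 hx
  have d2 := hc x (n - 1) v (n - 1) hx hy1
  rw [dist_eq, dist_eq] at d1 d2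
  omega

/-! ### Glue: the main ℕ-level factorization -/

lemma coreOP {n p : ℕ} {f : ℕ → Option ℕ} (hn : 3 ≤ n) (hp1 : 1 ≤ p) (hp2 : p + 2 ≤ n)
    (hb : Bdd n f) (hc : NC f) (hop : NOP f) (him : (NIm f).ncard = p)
    (hM : ∀ v ∈ NIm f, v + 2 ≤ n) :
    ∃ β γ, Bdd n β ∧ NC β ∧ NOP β ∧ Bdd n γ ∧ NC γ ∧ NOP γ ∧
      (NIm β).ncard = p + 1 ∧ (NIm γ).ncard = p + 1 ∧ ∀ x, (β x).bind γ = f x := by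
  classical
  by_cases hext : HasExt n f
  · exact lemB hp2 hb him hext
  by_cases hrep : ∃ x0 x1 a, x0 < x1 ∧ f x0 = some a ∧ f x1 = some a
  · obtain ⟨x0, x1, a, h1, h2, h3⟩ := hrep
    exact lemA hp2 hb hc hop him h1 h2 h3 hM
  -- the injective case
  have hinj : ∀ x y u, f x = some u → f y = some u → x = y := by
    intro x y u hx hy
    rcases lt_trichotomy x y with h | h | h
    · exact absurd ⟨x, y, u, h, hx, hy⟩ hrep
    · exact h
    · exact absurd ⟨y, x, u, h, hy, hx⟩ hrep
  set Dom : Set ℕ := {x | ∃ v, f x = some v} with hDom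
  have hDomsub : Dom ⊆ Set.Iio n := fun x hx => by
    obtain ⟨v, hv⟩ := hx; exact (hb x v hv).1
  have hDomfin : Dom.Finite := (Set.finite_Iio n).subset hDomsub
  have hDomcard : Dom.ncard = p := by
    have himg : (fun x => (f x).getD 0) '' Dom = NIm f := by
      ext v
      constructor
      · rintro ⟨x, ⟨u, hu⟩, hx⟩
        simp only [hu, Option.getD_some] at hx
        exact ⟨x, hx ▸ hu⟩
      · rintro ⟨x, hx⟩
        exact ⟨x, ⟨v, hx⟩, by simp [hx]⟩
    have hinjon : Set.InjOn (fun x => (f x).getD 0) Dom := by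
      rintro x ⟨u, hu⟩ y ⟨v, hv⟩ hxy
      simp only [hu, hv, Option.getD_some] at hxy
      exact hinj x y u (by rw [hu]) (by rw [hv, hxy])
    rw [← him, ← himg, Set.ncard_image_of_injOn hinjon]
  have hfnone : ∀ x, x ∉ Dom → f x = none := by
    intro x hx
    cases hfx : f x with
    | none => rfl
    | some v => exact absurd ⟨v, hfx⟩ hx
  -- two missing points
  have hdiff : (Set.Iio n \ Dom).ncard = n - p := by
    rw [Set.ncard_diff hDomsub hDomfin, ncard_Iio, hDomcard]
  obtain ⟨c, hcS, d, hdS, hcd⟩ : ∃ c ∈ Set.Iio n \ Dom, ∃ d ∈ Set.Iio n \ Dom, c ≠ d := by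
    have h1 : 1 < (Set.Iio n \ Dom).ncard := by omega
    have := (Set.one_lt_ncard_iff ((Set.finite_Iio n).subset Set.diff_subset)).mp h1
    obtain ⟨a, b, ha, hbb, hab⟩ := this
    exact ⟨a, ha, b, hbb, hab⟩
  -- order them : c is the larger
  obtain ⟨c', d', hc'S, hd'S, hdc'⟩ : ∃ c' d', c' ∈ Set.Iio n \ Dom ∧ d' ∈ Set.Iio n \ Dom ∧ d' < c' := by
    rcases lt_or_gt_of_ne hcd with h | h
    · exact ⟨d, c, hdS, hcS, h⟩
    · exact ⟨c, d, hcS, hdS, h⟩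
  obtain ⟨hc'lt, hc'nD⟩ := hc'S
  obtain ⟨hd'lt, hd'nD⟩ := hd'S
  simp only [Set.mem_Iio] at hc'lt hd'lt
  have hfc : f c' = none := hfnone c' hc'nD
  have hfd : f d' = none := hfnone d' hd'nD
  -- slack across c'
  have hslack : ∀ x y u v, f x = some u → f y = some v → x < c' → c' < y → v + x < u + y := by
    intro x y u v hfx hfy hxc hcy
    by_contra hcon
    push_neg at hcon
    have huv : u ≤ v := hop x y u v hfx hfy (by omega)
    have hd := hc x y u v hfx hfy
    rw [dist_eq, dist_eq] at hd
    have hteq : v + x = u + y := by omega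
    exact hext (tight_ext hb hc hop hc'lt hfc hxc hcy hfx hfy hteq)
  -- maximum of the image
  have hfin : (NIm f).Finite := nim_finite hb
  have hAne : (NIm f).Nonempty := Set.nonempty_of_ncard_ne_zero (by omega)
  obtain ⟨Mv, hMvA, hMvmax'⟩ := Set.Finite.exists_maximalFor id _ hfin hAne
  have hMvmax : ∀ v ∈ NIm f, v ≤ Mv := by
    intro v hv
    by_cases h : v ≤ Mv
    · exact h
    · have := hMvmax' (j := v) hv (by simp only [id]; omega)
      simp only [id] at this
      omega
  -- maximum of the domain
  obtain ⟨tx, htx⟩ := hMvA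
  obtain ⟨t, htD, htmax'⟩ := Set.Finite.exists_maximalFor id Dom hDomfin ⟨tx, ⟨Mv, htx⟩⟩
  have htmax : ∀ x y, f x = some y → x ≤ t := by
    intro x y hxy
    by_cases h : x ≤ t
    · exact h
    · have := htmax' (j := x) ⟨y, hxy⟩ (by simp only [id]; omega)
      simp only [id] at this
      omega
  obtain ⟨w, hw⟩ := htD
  have hwMv : w = Mv := by
    have h1 := hMvmax w ⟨t, hw⟩
    have h2 := hop tx t Mv w htx hw (htmax tx Mv htx)
    omega
  have hMA : f t = some Mv := hwMv ▸ hw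
  exact lemC hp2 hb hc hop him hinj hdc' hc'lt hfc hfd hslack hMA hMvmax (hM Mv ⟨tx, htx⟩) htmax

lemma natMainOP {n p : ℕ} {f : ℕ → Option ℕ} (hn : 3 ≤ n) (hp1 : 1 ≤ p) (hp2 : p + 2 ≤ n)
    (hb : Bdd n f) (hc : NC f) (hop : NOP f) (him : (NIm f).ncard = p) :
    ∃ β γ, Bdd n β ∧ NC β ∧ NOP β ∧ Bdd n γ ∧ NC γ ∧ NOP γ ∧
      (NIm β).ncard = p + 1 ∧ (NIm γ).ncard = p + 1 ∧ ∀ x, (β x).bind γ = f x := by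
  classical
  by_cases hM : ∀ v ∈ NIm f, v + 2 ≤ n
  · exact coreOP hn hp1 hp2 hb hc hop him hM
  push_neg at hM
  obtain ⟨w, hwA, hw2⟩ := hM
  have hwn : w < n := nim_sub hb hwA
  have hw_eq : w = n - 1 := by omega
  by_cases h0 : 0 ∈ NIm f
  · -- f is a restriction of the identity
    have hid : ∀ x v, f x = some v → v = x := sandwich hn hb hc hop h0 (hw_eq ▸ hwA)
    have hDomsubA : {x | ∃ v, f x = some v} ⊆ NIm f := by
      rintro x ⟨v, hv⟩
      have := hid x v hv
      exact ⟨x, by rw [hv, this]⟩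
    obtain ⟨xs, hxsn, hxsA⟩ : ∃ xs, xs < n ∧ xs ∉ NIm f :=
      exists_missing _ (nim_sub hb) (by omega)
    have hfxs : f xs = none := by
      cases hfx : f xs with
      | none => rfl
      | some v => exact absurd (hDomsubA ⟨v, hfx⟩) hxsA
    have hspec : ∀ x v, (if x = xs then some xs else f x) = some v → v = x := by
      intro x v hx
      by_cases h : x = xs
      · rw [if_pos h] at hx; injection hx with hx; omega
      · rw [if_neg h] at hx; exact hid x v hx
    apply lemB hp2 hb him
    refine ⟨xs, xs, hxsn, hxsn, hfxs, hxsA, ?_, ?_⟩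
    · intro x y a b h1 h2
      rw [hspec x a h1, hspec y b h2]
    · intro x y a b h1 h2 hxy
      rw [hspec x a h1, hspec y b h2]
      exact hxy
  · -- conjugate by the reversal
    have hbg : Bdd n (Tc n f) := Tc_bdd f
    have hcg : NC (Tc n f) := Tc_nc hb hc
    have hopg : NOP (Tc n f) := Tc_nop hb hop
    have himg : (NIm (Tc n f)).ncard = p := by rw [Tc_im_ncard hb, him]
    have hMg : ∀ v ∈ NIm (Tc n f), v + 2 ≤ n := by
      rw [Tc_im hb]
      rintro v ⟨u, huA, rfl⟩
      have hun : u < n := nim_sub hb huA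
      have hu0 : u ≠ 0 := fun h => h0 (h ▸ huA)
      simp only
      omega
    obtain ⟨β, γ, hbβ, hcβ, hopβ, hbγ, hcγ, hopγ, hcardβ, hcardγ, hcomp⟩ :=
      coreOP hn hp1 hp2 hbg hcg hopg himg hMg
    refine ⟨Tc n β, Tc n γ, Tc_bdd β, Tc_nc hbβ hcβ, Tc_nop hbβ hopβ,
      Tc_bdd γ, Tc_nc hbγ hcγ, Tc_nop hbγ hopγ, ?_, ?_, ?_⟩
    · rw [Tc_im_ncard hbβ, hcardβ]
    · rw [Tc_im_ncard hbγ, hcardγ]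
    · intro x
      have h1 := congrFun (Tc_comp (γ := γ) hbβ) x
      rw [h1]
      have h2 : (fun x => (β x).bind γ) = Tc n f := funext hcomp
      rw [h2, Tc_Tc hb]

/-- ℕ-level main theorem, allowing order-reversing `f`. -/
lemma natMain {n p : ℕ} {f : ℕ → Option ℕ} (hn : 3 ≤ n) (hp1 : 1 ≤ p) (hp2 : p + 2 ≤ n)
    (hb : Bdd n f) (hc : NC f) (hor : NOP f ∨ NOR f) (him : (NIm f).ncard = p) :
    ∃ β γ, Bdd n β ∧ NC β ∧ (NOP β ∨ NOR β) ∧ Bdd n γ ∧ NC γ ∧ (NOP γ ∨ NOR γ) ∧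
      (NIm β).ncard = p + 1 ∧ (NIm γ).ncard = p + 1 ∧ ∀ x, (β x).bind γ = f x := by
  classical
  rcases hor with hop | hnor
  · obtain ⟨β, γ, hbβ, hcβ, hopβ, hbγ, hcγ, hopγ, hcardβ, hcardγ, hcomp⟩ :=
      natMainOP hn hp1 hp2 hb hc hop him
    exact ⟨β, γ, hbβ, hcβ, Or.inl hopβ, hbγ, hcγ, Or.inl hopγ, hcardβ, hcardγ, hcomp⟩
  · set g : ℕ → Option ℕ := fun x => if x < n then f (n - 1 - x) else none with hg
    have hgspec : ∀ x u, g x = some u → x < n ∧ f (n - 1 - x) = some u := by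
      intro x u hx
      simp only [hg] at hx
      split at hx
      · exact ⟨by assumption, hx⟩
      · simp at hx
    have hgeval : ∀ x, x < n → g x = f (n - 1 - x) := by
      intro x hx
      simp only [hg, if_pos hx]
    have hbg : Bdd n g := by
      intro x u hx
      obtain ⟨h1, h2⟩ := hgspec x u hx
      exact ⟨h1, (hb _ _ h2).2⟩
    have hcg : NC g := by
      intro x y a b h1 h2
      obtain ⟨hx, h1'⟩ := hgspec x a h1
      obtain ⟨hy, h2'⟩ := hgspec y b h2
      have := hc _ _ _ _ h1' h2'
      rw [dist_eq, dist_eq] at this ⊢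
      omega
    have hopg : NOP g := by
      intro x y a b h1 h2 hxy
      obtain ⟨hx, h1'⟩ := hgspec x a h1
      obtain ⟨hy, h2'⟩ := hgspec y b h2
      exact hnor _ _ _ _ h2' h1' (by omega)
    have himg : NIm g = NIm f := by
      ext v
      constructor
      · rintro ⟨x, hx⟩
        exact ⟨n - 1 - x, (hgspec x v hx).2⟩
      · rintro ⟨x, hx⟩
        have hxn := (hb _ _ hx).1
        refine ⟨n - 1 - x, ?_⟩
        rw [hgeval _ (by omega), (by omega : n - 1 - (n - 1 - x) = x)]
        exact hx
    obtain ⟨β, γ, hbβ, hcβ, hopβ, hbγ, hcγ, hopγ, hcardβ, hcardγ, hcomp⟩ :=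
      natMainOP hn hp1 hp2 hbg hcg hopg (by rw [himg, him])
    set β' : ℕ → Option ℕ := fun x => if x < n then β (n - 1 - x) else none with hβ'
    have hβ'spec : ∀ x u, β' x = some u → x < n ∧ β (n - 1 - x) = some u := by
      intro x u hx
      simp only [hβ'] at hx
      split at hx
      · exact ⟨by assumption, hx⟩
      · simp at hx
    have hbβ' : Bdd n β' := by
      intro x u hx
      obtain ⟨h1, h2⟩ := hβ'spec x u hx
      exact ⟨h1, (hbβ _ _ h2).2⟩
    have hcβ' : NC β' := by
      intro x y a b h1 h2
      obtain ⟨hx, h1'⟩ := hβ'spec x a h1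
      obtain ⟨hy, h2'⟩ := hβ'spec y b h2
      have := hcβ _ _ _ _ h1' h2'
      rw [dist_eq, dist_eq] at this ⊢
      omega
    have hnorβ' : NOR β' := by
      intro x y a b h1 h2 hxy
      obtain ⟨hx, h1'⟩ := hβ'spec x a h1
      obtain ⟨hy, h2'⟩ := hβ'spec y b h2
      exact hopβ _ _ _ _ h2' h1' (by omega)
    have himβ' : NIm β' = NIm β := by
      ext v
      constructor
      · rintro ⟨x, hx⟩
        exact ⟨n - 1 - x, (hβ'spec x v hx).2⟩
      · rintro ⟨x, hx⟩
        have hxn := (hbβ _ _ hx).1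
        refine ⟨n - 1 - x, ?_⟩
        simp only [hβ', if_pos (show n - 1 - x < n by omega)]
        rw [(by omega : n - 1 - (n - 1 - x) = x)]
        exact hx
    refine ⟨β', γ, hbβ', hcβ', Or.inr hnorβ', hbγ, hcγ, Or.inl hopγ, ?_, hcardγ, ?_⟩
    · rw [himβ', hcardβ]
    · intro x
      by_cases hx : x < n
      · simp only [hβ', if_pos hx]
        rw [hcomp (n - 1 - x), hgeval _ (by omega), (by omega : n - 1 - (n - 1 - x) = x)]
      · simp only [hβ', if_neg hx]
        rw [Option.bind_none, bdd_none hb (by omega)]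

/-! ### Bridge between `PT n` and ℕ-level partial maps -/

def U {n : ℕ} (f : PT n) : ℕ → Option ℕ :=
  fun x => if h : x < n then (f ⟨x, h⟩).map Fin.val else none

lemma U_eval {n : ℕ} (f : PT n) (x : Fin n) : U f x.val = (f x).map Fin.val := by
  simp only [U, dif_pos x.isLt, Fin.eta]

lemma U_spec {n : ℕ} {f : PT n} {x u : ℕ} (h : U f x = some u) :
    ∃ (hx : x < n), ∃ a : Fin n, f ⟨x, hx⟩ = some a ∧ a.val = u := by
  by_cases hx : x < n
  · refine ⟨hx, ?_⟩
    simp only [U, dif_pos hx] at h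
    cases hfx : f ⟨x, hx⟩ with
    | none => rw [hfx] at h; simp at h
    | some a =>
      rw [hfx] at h
      simp only [Option.map_some] at h
      exact ⟨a, rfl, by injection h⟩
  · simp only [U, dif_neg hx] at h
    simp at h

lemma U_bdd {n : ℕ} (f : PT n) : Bdd n (U f) := by
  intro x u h
  obtain ⟨hx, a, ha, hau⟩ := U_spec h
  exact ⟨hx, by omega⟩

lemma U_nc {n : ℕ} {f : PT n} (h : IsContraction f) : NC (U f) := by
  intro x y a b h1 h2
  obtain ⟨hx, a', ha', hau⟩ := U_spec h1
  obtain ⟨hy, b', hb', hbu⟩ := U_spec h2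
  have := h _ _ _ _ ha' hb'
  simpa [hau, hbu] using this

lemma U_nop {n : ℕ} {f : PT n} (h : IsOP f) : NOP (U f) := by
  intro x y a b h1 h2 hxy
  obtain ⟨hx, a', ha', hau⟩ := U_spec h1
  obtain ⟨hy, b', hb', hbu⟩ := U_spec h2
  have := h _ _ _ _ ha' hb' (by simp only [Fin.le_def]; exact hxy)
  rw [Fin.le_def] at this
  omega

lemma U_nor {n : ℕ} {f : PT n} (h : IsOR f) : NOR (U f) := by
  intro x y a b h1 h2 hxy
  obtain ⟨hx, a', ha', hau⟩ := U_spec h1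
  obtain ⟨hy, b', hb', hbu⟩ := U_spec h2
  have := h _ _ _ _ ha' hb' (by simp only [Fin.le_def]; exact hxy)
  rw [Fin.le_def] at this
  omega

lemma U_im {n : ℕ} (f : PT n) : NIm (U f) = Fin.val '' im f := by
  ext u
  constructor
  · rintro ⟨x, hx⟩
    obtain ⟨hxn, a, ha, hau⟩ := U_spec hx
    exact ⟨a, ⟨_, ha⟩, hau⟩
  · rintro ⟨a, ⟨x, hx⟩, hau⟩
    refine ⟨x.val, ?_⟩
    rw [U_eval, hx, Option.map_some, hau]

lemma U_im_ncard {n : ℕ} (f : PT n) : (NIm (U f)).ncard = (im f).ncard := by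
  rw [U_im, Set.ncard_image_of_injective _ Fin.val_injective]

def D (n : ℕ) (g : ℕ → Option ℕ) : PT n :=
  fun x => (g x.val).bind (fun v => if h : v < n then some ⟨v, h⟩ else none)

lemma D_spec {n : ℕ} {g : ℕ → Option ℕ} {x a : Fin n} (h : D n g x = some a) :
    g x.val = some a.val := by
  simp only [D] at h
  cases hgx : g x.val with
  | none => rw [hgx] at h; simp at h
  | some v =>
    rw [hgx] at h
    simp only [Option.bind_some] at h
    split at h
    · injection h with h
      rw [← h]
    · simp at h

lemma D_eval {n : ℕ} {g : ℕ → Option ℕ} {x : Fin n} {v : ℕ} (hgx : g x.val = some v)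
    (hv : v < n) : D n g x = some ⟨v, hv⟩ := by
  simp only [D, hgx, Option.bind_some, dif_pos hv]

lemma D_eval_none {n : ℕ} {g : ℕ → Option ℕ} {x : Fin n} (hgx : g x.val = none) :
    D n g x = none := by
  simp only [D, hgx, Option.bind_none]

lemma D_contraction {n : ℕ} {g : ℕ → Option ℕ} (h : NC g) : IsContraction (D n g) :=
  fun x y a b h1 h2 => h x.val y.val a.val b.val (D_spec h1) (D_spec h2)

lemma D_op {n : ℕ} {g : ℕ → Option ℕ} (h : NOP g) : IsOP (D n g) :=
  fun x y a b h1 h2 hxy =>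
    Fin.le_def.mpr (h x.val y.val a.val b.val (D_spec h1) (D_spec h2) (Fin.le_def.mp hxy))

lemma D_or {n : ℕ} {g : ℕ → Option ℕ} (h : NOR g) : IsOR (D n g) :=
  fun x y a b h1 h2 hxy =>
    Fin.le_def.mpr (h x.val y.val a.val b.val (D_spec h1) (D_spec h2) (Fin.le_def.mp hxy))

lemma D_im {n : ℕ} {g : ℕ → Option ℕ} (hb : Bdd n g) : NIm g = Fin.val '' im (D n g) := by
  ext v
  constructor
  · rintro ⟨x, hx⟩
    have hxn := (hb _ _ hx).1
    have hvn := (hb _ _ hx).2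
    refine ⟨⟨v, hvn⟩, ⟨⟨x, hxn⟩, ?_⟩, rfl⟩
    exact D_eval hx hvn
  · rintro ⟨a, ⟨x, hx⟩, hav⟩
    exact ⟨x.val, hav ▸ D_spec hx⟩

lemma D_im_ncard {n : ℕ} {g : ℕ → Option ℕ} (hb : Bdd n g) :
    (im (D n g)).ncard = (NIm g).ncard := by
  rw [D_im hb, Set.ncard_image_of_injective _ Fin.val_injective]

end S15

/-- for `n ≥ 3` and `1 ≤ p ≤ n-2`, every `α ∈ ORCP_n` with `|im α| = p`
factors as a product of two elements of `ORCP_n` of image size `p+1`. -/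
theorem stmt_15 {n p : ℕ} (hn : 3 ≤ n) (hp1 : 1 ≤ p) (hp2 : p ≤ n - 2)
    (f : PT n) (hf : IsContraction f ∧ (IsOP f ∨ IsOR f)) (him : (im f).ncard = p) :
    ∃ β γ : PT n,
      (IsContraction β ∧ (IsOP β ∨ IsOR β)) ∧ (IsContraction γ ∧ (IsOP γ ∨ IsOR γ)) ∧
      (im β).ncard = p + 1 ∧ (im γ).ncard = p + 1 ∧ f = β * γ := by
  classical
  obtain ⟨hcf, horf⟩ := hf
  have hp2' : p + 2 ≤ n := by omega
  have hbU : S15.Bdd n (S15.U f) := S15.U_bdd f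
  have hcU : S15.NC (S15.U f) := S15.U_nc hcf
  have horU : S15.NOP (S15.U f) ∨ S15.NOR (S15.U f) := by
    rcases horf with h | h
    · exact Or.inl (S15.U_nop h)
    · exact Or.inr (S15.U_nor h)
  have himU : (S15.NIm (S15.U f)).ncard = p := by rw [S15.U_im_ncard, him]
  obtain ⟨βN, γN, hbβ, hcβ, hoβ, hbγ, hcγ, hoγ, hcardβ, hcardγ, hcomp⟩ :=
    S15.natMain hn hp1 hp2' hbU hcU horU himU
  refine ⟨S15.D n βN, S15.D n γN,
    ⟨S15.D_contraction hcβ, ?_⟩, ⟨S15.D_contraction hcγ, ?_⟩, ?_, ?_, ?_⟩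
  · rcases hoβ with h | h
    · exact Or.inl (S15.D_op h)
    · exact Or.inr (S15.D_or h)
  · rcases hoγ with h | h
    · exact Or.inl (S15.D_op h)
    · exact Or.inr (S15.D_or h)
  · rw [S15.D_im_ncard hbβ, hcardβ]
  · rw [S15.D_im_ncard hbγ, hcardγ]
  · funext x
    show f x = (S15.D n βN x).bind (S15.D n γN)
    have hUx : (βN x.val).bind γN = S15.U f x.val := hcomp x.val
    rw [S15.U_eval] at hUx
    cases hβx : βN x.val with
    | none =>
      rw [hβx, Option.bind_none] at hUx
      have hfx : f x = none := Option.map_eq_none_iff.mp hUx.symm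
      rw [S15.D_eval_none hβx, hfx, Option.bind_none]
    | some v =>
      have hvn : v < n := (hbβ _ _ hβx).2
      rw [S15.D_eval hβx hvn, Option.bind_some]
      rw [hβx, Option.bind_some] at hUx
      cases hfx : f x with
      | none =>
        rw [hfx] at hUx
        simp only [Option.map_none] at hUx
        rw [S15.D_eval_none (x := (⟨v, hvn⟩ : Fin n)) hUx]
      | some a =>
        rw [hfx] at hUx
        simp only [Option.map_some] at hUx
        rw [S15.D_eval (x := (⟨v, hvn⟩ : Fin n)) hUx a.isLt]
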